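/- Let $d, M \ge 0$ and let $\lambda_0 \in \mathbb{R}$ satisfy $|\lambda_0| \le 1/(8dM)$. Define $\lambda_k = \lambda_{k-1} + M\lambda_{k-1}^2$ for $k = 1, \ldots, d$. Then for every $k = 1, \ldots, d$ we have $|\lambda_k| \le 1/(6dM)$ and $\lambda_k \le \lambda_0 + 2kM\lambda_0^2$. -/
import Mathlib


set_option maxHeartbeats 1000000 in
theorem stmt_1 (d : ℕ) (hd : 1 ≤ d) (M : ℝ) (hM : 0 < M) (lam : ℕ → ℝ)
    (h0 : |lam 0| ≤ 1 / (8 * d * M))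
    (hrec : ∀ k, 1 ≤ k → k ≤ d → lam k = lam (k - 1) + M * lam (k - 1) ^ 2) :
    ∀ k, 1 ≤ k → k ≤ d →
      |lam k| ≤ 1 / (6 * d * M) ∧ lam k ≤ lam 0 + 2 * k * M * lam 0 ^ 2 := by
  have hd' : (1:ℝ) ≤ (d:ℝ) := by exact_mod_cast hd
  have h8pos : (0:ℝ) < 8 * d * M := by nlinarith
  have h6pos : (0:ℝ) < 6 * d * M := by nlinarith
  have hm : |lam 0| * (8 * d * M) ≤ 1 := by
    rw [← le_div_iff₀ h8pos]; exact h0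
  have ha0 : (0:ℝ) ≤ |lam 0| := abs_nonneg _
  have hl1 : -|lam 0| ≤ lam 0 := neg_abs_le _
  have hl2 : lam 0 ≤ |lam 0| := le_abs_self _
  have hsqa : lam 0 ^ 2 = |lam 0| ^ 2 := (sq_abs _).symm
  have key : ∀ k, k ≤ d → lam 0 ≤ lam k ∧ lam k ≤ lam 0 + 2 * k * M * lam 0 ^ 2 := by
    intro k
    induction k with
    | zero =>
      intro _
      refine ⟨le_refl _, ?_⟩
      push_cast
      nlinarith [sq_nonneg (lam 0)]
    | succ n ih =>
      intro hk
      have hn : n ≤ d := Nat.le_of_succ_le hk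
      have hn' : (n:ℝ) ≤ (d:ℝ) := by exact_mod_cast hn
      obtain ⟨hlo, hhi⟩ := ih hn
      have heq : lam (n+1) = lam n + M * lam n ^ 2 := by
        simpa using hrec (n+1) (Nat.le_add_left 1 n) hk
      have hb : |lam n| ≤ (5/4) * |lam 0| := by
        rw [abs_le]
        constructor
        · linarith
        · nlinarith [mul_le_mul_of_nonneg_right hm ha0,
            mul_nonneg (mul_nonneg (sub_nonneg.mpr hn') hM.le) (sq_nonneg (lam 0))]
      have hsq : lam n ^ 2 ≤ 2 * lam 0 ^ 2 := by
        nlinarith [mul_self_le_mul_self (abs_nonneg (lam n)) hb, sq_abs (lam n)]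
      constructor
      · nlinarith [sq_nonneg (lam n)]
      · push_cast
        nlinarith [mul_le_mul_of_nonneg_left hsq hM.le]
  intro k hk1 hk2
  have hk' : (k:ℝ) ≤ (d:ℝ) := by exact_mod_cast hk2
  obtain ⟨hlo, hhi⟩ := key k hk2
  refine ⟨?_, hhi⟩
  rw [abs_le]
  constructor
  · have hdiv : 1/(8*(d:ℝ)*M) ≤ 1/(6*(d:ℝ)*M) :=
      one_div_le_one_div_of_le h6pos (by linarith)
    linarith
  · rw [le_div_iff₀ h6pos]
    have hdm : (0:ℝ) < (d:ℝ) * M := by nlinarith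
    have h1 : lam k ≤ |lam 0| + 2 * ((d:ℝ)*M) * lam 0 ^ 2 := by
      nlinarith [mul_nonneg (mul_nonneg (sub_nonneg.mpr hk') hM.le) (sq_nonneg (lam 0))]
    have h2 : |lam 0| * ((d:ℝ)*M) ≤ 1/8 := by nlinarith
    have h3 : lam 0 ^ 2 * ((d:ℝ)*M)^2 ≤ 1/64 := by
      have h4 := mul_self_le_mul_self (mul_nonneg ha0 hdm.le) h2
      have h5 : lam 0 ^ 2 * ((d:ℝ)*M)^2 = (|lam 0| * ((d:ℝ)*M)) * (|lam 0| * ((d:ℝ)*M)) := by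
        rw [hsqa]; ring
      rw [h5]; linarith
    nlinarith [mul_le_mul_of_nonneg_right h1 h6pos.le, sq_nonneg ((d:ℝ)*M)]
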